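/- Suppose -L_F is convex and L-smooth in (u,w) jointly, the gradients satisfy the bounded-gradient condition ‖∇_w L_C(w)‖ ≤ G‖∇_w L_F(w)‖, and at each step the updates are u_{t+1} = u_t + η₁∇_u L_F, w_{t+1} = w_t - η₂(∇_w L_C - α∇_w L_F - Π_{∇_w L_F}∇_w L_C) with η₁ = 1/(2L) and η₂ = α/(2L(1+G²)) for some α ∈ (0,1]. Then L_F(w_{t+1}, u_{t+1}) - L_F(w_t, u_t) ≥ (α²/(4L(1+G²)))·(‖∇_u L_F(w_t,u_t)‖² + ‖∇_w L_F(w_t,u_t)‖²). -/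

import Mathlib

open RealInnerProductSpace

section Aux
open InnerProductSpace Set

lemma descent_aux {H : Type*} [NormedAddCommGroup H] [InnerProductSpace ℝ H] [CompleteSpace H]
    (f : H → ℝ) (L : ℝ) (hdiff : Differentiable ℝ f)
    (hlip : ∀ p q : H, ‖gradient f p - gradient f q‖ ≤ L * ‖p - q‖) (x y : H) :
    f y ≥ f x + ⟪gradient f x, y - x⟫ - L / 2 * ‖y - x‖ ^ 2 := by
  set v := y - x with hv
  have hline : ∀ t : ℝ, HasDerivAt (fun s : ℝ => f (x + s • v)) ⟪gradient f (x + t • v), v⟫ t := by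
    intro t
    have h1 : HasDerivAt (fun s : ℝ => x + s • v) v t := by
      simpa using ((hasDerivAt_id t).smul_const v).const_add x
    have h2 : HasFDerivAt f (toDual ℝ H (gradient f (x + t • v))) (x + t • v) :=
      hasGradientAt_iff_hasFDerivAt.mp (hdiff _).hasGradientAt
    simpa [Function.comp_def] using h2.comp_hasDerivAt t h1
  set φ : ℝ → ℝ := fun t => f (x + t • v) - t * ⟪gradient f x, v⟫ + L / 2 * t ^ 2 * ‖v‖ ^ 2 with hφ
  have hφd : ∀ t : ℝ, HasDerivAt φ
      (⟪gradient f (x + t • v), v⟫ - ⟪gradient f x, v⟫ + L / 2 * (2 * t) * ‖v‖ ^ 2) t := by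
    intro t
    have ha := (hline t).sub ((hasDerivAt_id t).mul_const ⟪gradient f x, v⟫)
    have hb : HasDerivAt (fun s : ℝ => L / 2 * s ^ 2 * ‖v‖ ^ 2) (L / 2 * (2 * t) * ‖v‖ ^ 2) t := by
      have := ((hasDerivAt_pow 2 t).const_mul (L / 2)).mul_const (‖v‖ ^ 2)
      refine this.congr_deriv ?_
      norm_num
    exact (ha.add hb).congr_deriv (by ring)
  have hφdiff : Differentiable ℝ φ := fun t => (hφd t).differentiableAt
  have hmono : MonotoneOn φ (Icc (0 : ℝ) 1) := by
    apply monotoneOn_of_deriv_nonneg (convex_Icc 0 1) hφdiff.continuous.continuousOn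
      hφdiff.differentiableOn
    intro t ht
    rw [interior_Icc] at ht
    rw [(hφd t).deriv]
    have h1 : ⟪gradient f x - gradient f (x + t • v), v⟫ ≤ L * t * ‖v‖ ^ 2 := by
      calc ⟪gradient f x - gradient f (x + t • v), v⟫
          ≤ ‖gradient f x - gradient f (x + t • v)‖ * ‖v‖ := real_inner_le_norm _ _
        _ ≤ (L * ‖x - (x + t • v)‖) * ‖v‖ := by
            apply mul_le_mul_of_nonneg_right (hlip _ _) (norm_nonneg _)
        _ = L * t * ‖v‖ ^ 2 := by
            rw [show x - (x + t • v) = -(t • v) by abel, norm_neg, norm_smul]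
            simp [abs_of_pos ht.1]
            ring
    rw [inner_sub_left] at h1
    linarith
  have h01 := hmono (left_mem_Icc.mpr zero_le_one) (right_mem_Icc.mpr zero_le_one) zero_le_one
  have hφ0 : φ 0 = f x := by simp [hφ]
  have hφ1 : φ 1 = f y - ⟪gradient f x, v⟫ + L / 2 * ‖v‖ ^ 2 := by
    simp [hφ, hv]
  rw [hφ0, hφ1] at h01
  linarith

variable {E F : Type*} [NormedAddCommGroup E] [InnerProductSpace ℝ E] [CompleteSpace E]
  [NormedAddCommGroup F] [InnerProductSpace ℝ F] [CompleteSpace F]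

lemma grad_fst (f : WithLp 2 (E × F) → ℝ) (hf : Differentiable ℝ f) (u : E) (w : F) :
    HasGradientAt (fun u' : E => f ((WithLp.equiv 2 (E × F)).symm (u', w)))
      (gradient f ((WithLp.equiv 2 (E × F)).symm (u, w))).ofLp.1 u := by
  set p := (WithLp.equiv 2 (E × F)).symm (u, w) with hp
  have hfd : HasFDerivAt f (toDual ℝ _ (gradient f p)) p :=
    hasGradientAt_iff_hasFDerivAt.mp (hf p).hasGradientAt
  have h1 : HasFDerivAt (fun u' : E => (WithLp.equiv 2 (E × F)).symm (u', w))
      (((WithLp.prodContinuousLinearEquiv 2 ℝ E F).symm :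
          (E × F) →L[ℝ] WithLp 2 (E × F)).comp (ContinuousLinearMap.inl ℝ E F)) u :=
    ((WithLp.prodContinuousLinearEquiv 2 ℝ E F).symm :
        (E × F) →L[ℝ] WithLp 2 (E × F)).hasFDerivAt.comp u (hasFDerivAt_prodMk_left u w)
  have h2 := hfd.comp u h1
  have h3 : (toDual ℝ (WithLp 2 (E × F)) (gradient f p)).comp
      (((WithLp.prodContinuousLinearEquiv 2 ℝ E F).symm :
          (E × F) →L[ℝ] WithLp 2 (E × F)).comp (ContinuousLinearMap.inl ℝ E F))
      = toDual ℝ E (gradient f p).ofLp.1 := by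
    ext du
    simp [WithLp.prod_inner_apply]
    rw [← toDual_gradient, toDual_apply_apply, WithLp.prod_inner_apply]
    simp only [WithLp.ofLp_toLp, WithLp.ofLp_fst, WithLp.ofLp_snd, inner_zero_right, add_zero, zero_add]
  rw [h3] at h2
  exact hasGradientAt_iff_hasFDerivAt.mpr h2

lemma grad_snd (f : WithLp 2 (E × F) → ℝ) (hf : Differentiable ℝ f) (u : E) (w : F) :
    HasGradientAt (fun w' : F => f ((WithLp.equiv 2 (E × F)).symm (u, w')))
      (gradient f ((WithLp.equiv 2 (E × F)).symm (u, w))).ofLp.2 w := by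
  set p := (WithLp.equiv 2 (E × F)).symm (u, w) with hp
  have hfd : HasFDerivAt f (toDual ℝ _ (gradient f p)) p :=
    hasGradientAt_iff_hasFDerivAt.mp (hf p).hasGradientAt
  have h1 : HasFDerivAt (fun w' : F => (WithLp.equiv 2 (E × F)).symm (u, w'))
      (((WithLp.prodContinuousLinearEquiv 2 ℝ E F).symm :
          (E × F) →L[ℝ] WithLp 2 (E × F)).comp (ContinuousLinearMap.inr ℝ E F)) w :=
    ((WithLp.prodContinuousLinearEquiv 2 ℝ E F).symm :
        (E × F) →L[ℝ] WithLp 2 (E × F)).hasFDerivAt.comp w (hasFDerivAt_prodMk_right u w)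
  have h2 := hfd.comp w h1
  have h3 : (toDual ℝ (WithLp 2 (E × F)) (gradient f p)).comp
      (((WithLp.prodContinuousLinearEquiv 2 ℝ E F).symm :
          (E × F) →L[ℝ] WithLp 2 (E × F)).comp (ContinuousLinearMap.inr ℝ E F))
      = toDual ℝ F (gradient f p).ofLp.2 := by
    ext dw
    simp [WithLp.prod_inner_apply]
    rw [← toDual_gradient, toDual_apply_apply, WithLp.prod_inner_apply]
    simp only [WithLp.ofLp_toLp, WithLp.ofLp_fst, WithLp.ofLp_snd, inner_zero_right, add_zero, zero_add]
  rw [h3] at h2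
  exact hasGradientAt_iff_hasFDerivAt.mpr h2

lemma scalar_key (L G α a b V : ℝ) (hL : 0 < L) (hG : 0 < G) (hα : 0 < α) (hα1 : α ≤ 1)
    (ha : 0 ≤ a) (hb : 0 ≤ b) (hV : 0 ≤ V) (hVb : V ≤ (1 + G ^ 2) * b) :
    1 / (2 * L) * a + α / (2 * L * (1 + G ^ 2)) * (α * b)
        - L / 2 * ((1 / (2 * L)) ^ 2 * a + (α / (2 * L * (1 + G ^ 2))) ^ 2 * V)
      ≥ α ^ 2 / (4 * L * (1 + G ^ 2)) * (a + b) := by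
  have hK : (0:ℝ) < 1 + G ^ 2 := by positivity
  have h8 : (0:ℝ) < 8 * L * (1 + G ^ 2) ^ 2 := by positivity
  rw [ge_iff_le, ← sub_nonneg]
  have hEq : 1 / (2 * L) * a + α / (2 * L * (1 + G ^ 2)) * (α * b)
        - L / 2 * ((1 / (2 * L)) ^ 2 * a + (α / (2 * L * (1 + G ^ 2))) ^ 2 * V)
        - α ^ 2 / (4 * L * (1 + G ^ 2)) * (a + b)
      = (3 * (1 + G ^ 2) ^ 2 * a - 2 * α ^ 2 * (1 + G ^ 2) * a
          + 2 * α ^ 2 * (1 + G ^ 2) * b - α ^ 2 * V) / (8 * L * (1 + G ^ 2) ^ 2) := by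
    field_simp
    ring
  rw [hEq]
  apply div_nonneg _ h8.le
  have h1 : α ^ 2 * V ≤ α ^ 2 * ((1 + G ^ 2) * b) :=
    mul_le_mul_of_nonneg_left hVb (sq_nonneg α)
  have h2 : α ^ 2 ≤ 1 + G ^ 2 := by nlinarith
  nlinarith [mul_le_mul_of_nonneg_right h2 ha, sq_nonneg G, mul_nonneg (mul_nonneg hK.le hK.le) ha]

end Aux


set_option maxHeartbeats 1000000 in
theorem stmt6 {m n : ℕ}
    (LF : EuclideanSpace ℝ (Fin m) → EuclideanSpace ℝ (Fin n) → ℝ)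
    (LC : EuclideanSpace ℝ (Fin n) → ℝ) (L G α : ℝ)
    (hL : 0 < L) (hG : 0 < G) (hα : 0 < α) (hα1 : α ≤ 1)
    (hconv : ConvexOn ℝ Set.univ
      (fun p : WithLp 2 (EuclideanSpace ℝ (Fin m) × EuclideanSpace ℝ (Fin n)) =>
        -(LF ((WithLp.equiv 2 _) p).1 ((WithLp.equiv 2 _) p).2)))
    (hdiff : Differentiable ℝ
      (fun p : WithLp 2 (EuclideanSpace ℝ (Fin m) × EuclideanSpace ℝ (Fin n)) =>
        LF ((WithLp.equiv 2 _) p).1 ((WithLp.equiv 2 _) p).2))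
    (hsmooth : ∀ p q : WithLp 2 (EuclideanSpace ℝ (Fin m) × EuclideanSpace ℝ (Fin n)),
      ‖gradient (fun r : WithLp 2 (EuclideanSpace ℝ (Fin m) × EuclideanSpace ℝ (Fin n)) =>
            LF ((WithLp.equiv 2 _) r).1 ((WithLp.equiv 2 _) r).2) p
        - gradient (fun r : WithLp 2 (EuclideanSpace ℝ (Fin m) × EuclideanSpace ℝ (Fin n)) =>
            LF ((WithLp.equiv 2 _) r).1 ((WithLp.equiv 2 _) r).2) q‖ ≤ L * ‖p - q‖)
    (hdiffC : Differentiable ℝ LC)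
    (hbound : ∀ (u : EuclideanSpace ℝ (Fin m)) (w : EuclideanSpace ℝ (Fin n)),
      ‖gradient LC w‖ ≤ G * ‖gradient (fun w' => LF u w') w‖)
    (u : EuclideanSpace ℝ (Fin m)) (w : EuclideanSpace ℝ (Fin n))
    (hne : gradient (fun w' => LF u w') w ≠ 0) :
    LF (u + (1 / (2 * L)) • gradient (fun u' => LF u' w) u)
        (w - (α / (2 * L * (1 + G ^ 2))) •
          (gradient LC w - α • gradient (fun w' => LF u w') w -
            (⟪gradient LC w, gradient (fun w' => LF u w') w⟫ /
                ⟪gradient (fun w' => LF u w') w, gradient (fun w' => LF u w') w⟫) •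
              gradient (fun w' => LF u w') w))
      - LF u w
      ≥ α ^ 2 / (4 * L * (1 + G ^ 2)) *
        (‖gradient (fun u' => LF u' w) u‖ ^ 2 + ‖gradient (fun w' => LF u w') w‖ ^ 2) := by
  classical
  have hE : True := trivial
  set f : WithLp 2 (EuclideanSpace ℝ (Fin m) × EuclideanSpace ℝ (Fin n)) → ℝ :=
    fun p => LF ((WithLp.equiv 2 _) p).1 ((WithLp.equiv 2 _) p).2 with hfdef
  set gu := gradient (fun u' => LF u' w) u with hgudef
  set gw := gradient (fun w' => LF u w') w with hgwdef
  set gc := gradient LC w with hgcdef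
  set η₁ := 1 / (2 * L) with hη₁
  set η₂ := α / (2 * L * (1 + G ^ 2)) with hη₂
  set v := gc - α • gw - (⟪gc, gw⟫ / ⟪gw, gw⟫) • gw with hvdef
  set x : WithLp 2 (EuclideanSpace ℝ (Fin m) × EuclideanSpace ℝ (Fin n)) := (WithLp.equiv 2 (EuclideanSpace ℝ (Fin m) × EuclideanSpace ℝ (Fin n))).symm (u, w) with hx
  set y : WithLp 2 (EuclideanSpace ℝ (Fin m) × EuclideanSpace ℝ (Fin n)) := (WithLp.equiv 2 (EuclideanSpace ℝ (Fin m) × EuclideanSpace ℝ (Fin n))).symm (u + η₁ • gu, w - η₂ • v) with hy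
  have hgu : gu = (gradient f x).ofLp.1 := HasGradientAt.gradient (grad_fst f hdiff u w)
  have hgw : gw = (gradient f x).ofLp.2 := HasGradientAt.gradient (grad_snd f hdiff u w)
  have hA0 : (0:ℝ) < ⟪gw, gw⟫ := by
    rw [real_inner_self_eq_norm_sq]
    exact pow_pos (norm_pos_iff.mpr hne) 2
  have key := descent_aux f L hdiff hsmooth x y
  have hd : y - x = (WithLp.equiv 2 (EuclideanSpace ℝ (Fin m) × EuclideanSpace ℝ (Fin n))).symm (η₁ • gu, -(η₂ • v)) := by
    apply (WithLp.equiv 2 (EuclideanSpace ℝ (Fin m) × EuclideanSpace ℝ (Fin n))).injective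
    simp only [WithLp.equiv_apply, WithLp.ofLp_sub, hy, hx, WithLp.equiv_symm_apply, WithLp.ofLp_toLp,
      Prod.mk_sub_mk]
    rw [add_sub_cancel_left, sub_sub_cancel_left]
  have hinner_gwv : ⟪gw, v⟫ = -(α * ⟪gw, gw⟫) := by
    rw [hvdef, inner_sub_right, inner_sub_right, real_inner_smul_right, real_inner_smul_right,
      real_inner_comm gw gc, div_mul_cancel₀ _ hA0.ne']
    ring
  have hinner : ⟪gradient f x, y - x⟫ = η₁ * ‖gu‖ ^ 2 + η₂ * (α * ‖gw‖ ^ 2) := by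
    rw [hd, WithLp.prod_inner_apply]
    simp only [WithLp.equiv_symm_apply, WithLp.ofLp_toLp]
    rw [← hgu, ← hgw, real_inner_smul_right, inner_neg_right, real_inner_smul_right,
      hinner_gwv, real_inner_self_eq_norm_sq, real_inner_self_eq_norm_sq]
    ring
  have hnorm : ‖y - x‖ ^ 2 = η₁ ^ 2 * ‖gu‖ ^ 2 + η₂ ^ 2 * ⟪v, v⟫ := by
    rw [← real_inner_self_eq_norm_sq, hd, WithLp.prod_inner_apply]
    simp only [WithLp.equiv_symm_apply, WithLp.ofLp_toLp, inner_neg_neg]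
    rw [real_inner_smul_left, real_inner_smul_left, real_inner_smul_right,
      real_inner_smul_right, real_inner_self_eq_norm_sq]
    ring
  have hvv : ⟪v, v⟫ ≤ (1 + G ^ 2) * ‖gw‖ ^ 2 := by
    have hb := hbound u w
    have hB2 : ⟪gc, gc⟫ ≤ G ^ 2 * ⟪gw, gw⟫ := by
      rw [real_inner_self_eq_norm_sq, real_inner_self_eq_norm_sq]
      nlinarith [norm_nonneg gc, norm_nonneg gw, mul_nonneg hG.le (norm_nonneg gw)]
    have hexp : ⟪v, v⟫ = ⟪gc, gc⟫ + α ^ 2 * ⟪gw, gw⟫ - ⟪gc, gw⟫ ^ 2 / ⟪gw, gw⟫ := by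
      rw [hvdef]
      simp only [inner_sub_left, inner_sub_right, real_inner_smul_left, real_inner_smul_right,
        real_inner_comm gw gc]
      generalize hsgen : (inner ℝ gc gw : ℝ) = s
      generalize hAgen : (inner ℝ gw gw : ℝ) = A at hA0
      generalize hBgen : (inner ℝ gc gc : ℝ) = B
      field_simp
      ring
    rw [hexp]
    have hs : 0 ≤ ⟪gc, gw⟫ ^ 2 / ⟪gw, gw⟫ := div_nonneg (sq_nonneg _) hA0.le
    have hα2 : α ^ 2 ≤ 1 := by nlinarith
    rw [← real_inner_self_eq_norm_sq]
    nlinarith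
  have hVn : (0:ℝ) ≤ ⟪v, v⟫ := real_inner_self_nonneg
  have final := scalar_key L G α (‖gu‖ ^ 2) (‖gw‖ ^ 2) ⟪v, v⟫ hL hG hα hα1
    (sq_nonneg _) (sq_nonneg _) hVn hvv
  rw [← hη₁, ← hη₂] at final
  rw [hinner, hnorm] at key
  show f y - f x ≥ _
  linarith [key, final]
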